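/- Let 𝒜 be a unital associative algebra over ℂ, let A, H ∈ 𝒜, let z ∈ ℂ, and suppose A − z·1 is invertible with inverse R = (A − z·1)^{−1}. Define iterated commutators by ad_A^{(0)}(H) = H and ad_A^{(k+1)}(H) = ad_A^{(k)}(H)·A − A·ad_A^{(k)}(H). Then H·R − R·H = −(1/2)·(R²·ad_A^{(1)}(H) + ad_A^{(1)}(H)·R²) + (1/2)·R²·ad_A^{(3)}(H)·R². -/
import Mathlib


/-- Iterated commutator: `ad_A^(0)(H) = H`, `ad_A^(k+1)(H) = ad_A^(k)(H)·A − A·ad_A^(k)(H)`. -/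
def adIter {A : Type*} [Ring A] (a h : A) : ℕ → A
  | 0 => h
  | k + 1 => adIter a h k * a - a * adIter a h k

/-- Symmetrized resolvent-commutator identity: if `R = (A − z)⁻¹` then
`[H, R] = −(1/2)(R²[H,A] + [H,A]R²) + (1/2) R² ad_A^{(3)}(H) R²`. -/
theorem stmt16 {𝒜 : Type*} [Ring 𝒜] [Algebra ℂ 𝒜] (A H : 𝒜) (z : ℂ) (R : 𝒜)
    (hR₁ : (A - algebraMap ℂ 𝒜 z) * R = 1)
    (hR₂ : R * (A - algebraMap ℂ 𝒜 z) = 1) :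
    H * R - R * H
      = -((1 / 2 : ℂ) • (R ^ 2 * adIter A H 1 + adIter A H 1 * R ^ 2))
        + (1 / 2 : ℂ) • (R ^ 2 * adIter A H 3 * R ^ 2) := by
  set b := A - algebraMap ℂ 𝒜 z with hb
  have key : ∀ x : 𝒜, x * A - A * x = x * b - b * x := by
    intro x
    rw [hb, mul_sub, sub_mul, Algebra.commutes z x]
    abel
  have hC1 : adIter A H 1 = H * b - b * H := by
    show H * A - A * H = _
    rw [key]
  have hC3 : adIter A H 3
      = ((H * b - b * H) * b - b * (H * b - b * H)) * b
        - b * ((H * b - b * H) * b - b * (H * b - b * H)) := by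
    show adIter A H 2 * A - A * adIter A H 2 = _
    rw [key, show adIter A H 2 = adIter A H 1 * A - A * adIter A H 1 from rfl, key, hC1]
  have h1 : ∀ x : 𝒜, b * (R * x) = x := fun x => by rw [← mul_assoc, hR₁, one_mul]
  have h2 : ∀ x : 𝒜, R * (b * x) = x := fun x => by rw [← mul_assoc, hR₂, one_mul]
  set C : 𝒜 := H * b - b * H with hC
  have hL : H * R - R * H = -(R * C * R) := by
    have e1 : H * R = R * (b * (H * R)) := (h2 _).symm
    have e2 : R * H = R * (H * b) * R := by
      rw [mul_assoc, mul_assoc, hR₁, mul_one]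
    rw [e1, e2, hC]
    noncomm_ring
  have hexp : R ^ 2 * adIter A H 3 * R ^ 2
      = (R ^ 2 * C + C * R ^ 2) - (R * C * R + R * C * R) := by
    rw [hC3, hC]
    simp only [pow_two, mul_sub, sub_mul, mul_assoc, h1, h2, hR₁, hR₂, mul_one, one_mul]
    abel
  have h3 : (1 / 2 : ℂ) • (R * C * R + R * C * R) = R * C * R := by
    rw [← two_smul ℂ, smul_smul]
    norm_num
  rw [hC1, hexp, hL, smul_sub, h3, sub_eq_add_neg, neg_add_cancel_left]
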